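/- For every integer n ≥ 1 and every integer k with 1 ≤ k ≤ n, one has ∑_{m=1}^{n} α_m^{(2)}(n) · m^{2k} = δ_{1k}, where δ_{1k} is the Kronecker delta (equal to 1 if k = 1 and 0 otherwise). -/

import Mathlib

open Finset

/-- `π_m(n) = ∏_{k=1, k ≠ m}^{n} (1 - m²/k²)`. -/
noncomputable def pim (n m : ℕ) : ℝ :=
  ∏ k ∈ (Finset.Icc 1 n).erase m, (1 - (m : ℝ) ^ 2 / (k : ℝ) ^ 2)

/-- `α_m^{(2)}(n) = 1 / (m² · π_m(n))`. -/
noncomputable def alpha2 (n m : ℕ) : ℝ := 1 / ((m : ℝ) ^ 2 * pim n m)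

open Polynomial

lemma lead_basis {s : Finset ℕ} {v : ℕ → ℝ} (hvs : Set.InjOn v s) {i : ℕ} (hi : i ∈ s) :
    (Lagrange.basis s v i).leadingCoeff = ∏ j ∈ s.erase i, (v i - v j)⁻¹ := by
  rw [Lagrange.basis, Polynomial.leadingCoeff_prod]
  refine Finset.prod_congr rfl fun j hj => ?_
  have hij : v i ≠ v j := fun h => (Finset.ne_of_mem_erase hj).symm
    (hvs hi (Finset.mem_of_mem_erase hj) h)
  rw [Lagrange.basisDivisor, leadingCoeff_mul, leadingCoeff_C,
    (monic_X_sub_C (v j)).leadingCoeff, mul_one]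

lemma key (n k : ℕ) (hn : 1 ≤ n) (hk1 : 1 ≤ k) (hkn : k ≤ n) :
    ∑ i ∈ Finset.range (n+1), ((i:ℝ)^2)^(k-1) *
      ∏ j ∈ (Finset.range (n+1)).erase i, ((i:ℝ)^2 - (j:ℝ)^2)⁻¹ = 0 := by
  set v : ℕ → ℝ := fun i => (i:ℝ)^2 with hv
  have hvs : Set.InjOn v (Finset.range (n+1)) := by
    intro i _ j _ h
    simp only [hv] at h
    have : (i:ℝ) = j := by nlinarith [Nat.cast_nonneg (α := ℝ) i, Nat.cast_nonneg (α := ℝ) j]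
    exact_mod_cast this
  set s := Finset.range (n+1) with hs
  have hcard : #s = n + 1 := by simp [hs]
  have hdeg : ((X : ℝ[X])^(k-1)).degree < #s := by
    rw [hcard, degree_X_pow]
    exact_mod_cast Nat.lt_succ_of_le (le_trans (Nat.sub_le k 1) hkn)
  have heq := Lagrange.eq_interpolate hvs hdeg
  have hc := congrArg (fun p : ℝ[X] => p.coeff n) heq
  simp only [Lagrange.interpolate_apply, Polynomial.finset_sum_coeff, coeff_C_mul,
    coeff_X_pow] at hc
  have hk1n : ¬ (n = k - 1) := by omega
  rw [if_neg hk1n] at hc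
  refine Eq.trans ?_ hc.symm
  refine Finset.sum_congr rfl fun i hi => ?_
  have hnb : (Lagrange.basis s v i).natDegree = n := by
    rw [Lagrange.natDegree_basis hvs hi, hcard]
    omega
  have hlc : (Lagrange.basis s v i).coeff n = (Lagrange.basis s v i).leadingCoeff := by
    rw [← hnb]; rfl
  rw [hlc, lead_basis hvs hi]
  simp [hv, eval_pow]

lemma sq_ne {j m : ℕ} (h : j ≠ m) : ((j:ℝ))^2 - ((m:ℝ))^2 ≠ 0 := by
  intro hc
  have : (j:ℝ) = m := by nlinarith [Nat.cast_nonneg (α := ℝ) j, Nat.cast_nonneg (α := ℝ) m]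
  exact h (by exact_mod_cast this)

lemma prod_Icc_sq (n : ℕ) : ∏ j ∈ Finset.Icc 1 n, ((j:ℝ))^2 = (n.factorial : ℝ)^2 := by
  have h : ∏ j ∈ Finset.Icc 1 n, ((j:ℕ):ℝ) = (n.factorial : ℝ) := by
    rw [← Nat.cast_prod]
    congr 1
    rw [← Finset.Ico_add_one_right_eq_Icc, Finset.prod_Ico_id_eq_factorial]
  rw [Finset.prod_pow, h]

lemma term_eq (n k m : ℕ) (hn : 1 ≤ n) (hk1 : 1 ≤ k) (hm : m ∈ Finset.Icc 1 n) :
    ((m:ℝ)^2)^(k-1) * ∏ j ∈ (Finset.range (n+1)).erase m, ((m:ℝ)^2 - (j:ℝ)^2)⁻¹ =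
      (-1)^(n-1) / (n.factorial : ℝ)^2 * (alpha2 n m * (m:ℝ)^(2*k)) := by
  rw [Finset.mem_Icc] at hm
  have hm0 : ((m:ℝ)) ≠ 0 := Nat.cast_ne_zero.mpr (by omega)
  set E := (Finset.Icc 1 n).erase m with hE
  set x := ((m:ℝ))^2 with hx
  set P := ∏ j ∈ E, ((j:ℝ)^2 - x) with hP
  set Q := ∏ j ∈ E, ((j:ℝ))^2 with hQ
  have hmIcc : m ∈ Finset.Icc 1 n := Finset.mem_Icc.mpr hm
  have hxne : x ≠ 0 := pow_ne_zero 2 hm0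
  have hPne : P ≠ 0 := Finset.prod_ne_zero_iff.mpr fun j hj =>
    sq_ne (Finset.ne_of_mem_erase hj)
  have hQne : Q ≠ 0 := Finset.prod_ne_zero_iff.mpr fun j hj =>
    pow_ne_zero 2 (Nat.cast_ne_zero.mpr (by
      have := Finset.mem_Icc.mp (Finset.mem_of_mem_erase hj); omega))
  have hcardE : #E = n - 1 := by
    rw [hE, Finset.card_erase_of_mem hmIcc, Nat.card_Icc]
    omega
  have h1 : pim n m = P / Q := by
    rw [pim, ← Finset.prod_div_distrib]
    refine Finset.prod_congr rfl fun j hj => ?_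
    have hj0 : ((j:ℝ)) ≠ 0 := Nat.cast_ne_zero.mpr (by
      have := Finset.mem_Icc.mp (Finset.mem_of_mem_erase hj); omega)
    field_simp
    rw [hx]
  have h2 : x * Q = (n.factorial : ℝ)^2 := by
    rw [hQ, hx, hE, Finset.mul_prod_erase (Finset.Icc 1 n) (fun j => ((j:ℝ))^2) hmIcc,
      prod_Icc_sq]
  have hins : (Finset.range (n+1)).erase m = insert 0 E := by
    ext j
    simp only [Finset.mem_erase, Finset.mem_range, Finset.mem_insert, hE, Finset.mem_Icc]
    omega
  have h0E : 0 ∉ E := by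
    simp only [hE, Finset.mem_erase, Finset.mem_Icc]; omega
  have h3 : ∏ j ∈ (Finset.range (n+1)).erase m, (x - (j:ℝ)^2)⁻¹
      = x⁻¹ * ((-1)^(n-1) * P⁻¹) := by
    rw [hins, Finset.prod_insert h0E]
    congr 1
    · norm_num
    · calc ∏ j ∈ E, (x - (j:ℝ)^2)⁻¹ = ∏ j ∈ E, (-1 * ((j:ℝ)^2 - x)⁻¹) := by
            refine Finset.prod_congr rfl fun j hj => ?_
            rw [show x - (j:ℝ)^2 = -((j:ℝ)^2 - x) by ring, inv_neg]; ring
        _ = (-1)^(n-1) * P⁻¹ := by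
            rw [Finset.prod_mul_distrib, Finset.prod_const, hcardE, hP,
              Finset.prod_inv_distrib]
  rw [h3, alpha2, h1]
  have hfac : (n.factorial : ℝ)^2 = x * Q := h2.symm
  rw [hfac]
  obtain ⟨k', rfl⟩ : ∃ k', k = k' + 1 := ⟨k - 1, by omega⟩
  have hpow : ((m:ℝ))^(2*(k'+1)) = x^k' * x := by
    rw [hx, ← pow_mul]; ring
  rw [hpow]
  have hsq : ((-1:ℝ))^(n-1) * ((-1:ℝ))^(n-1) = 1 := by
    rw [← pow_add]
    exact Even.neg_one_pow ⟨n-1, rfl⟩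
  simp only [Nat.add_sub_cancel]
  rw [hx] at hxne ⊢
  field_simp

/-- for every `n ≥ 1` and every `1 ≤ k ≤ n`,
`∑_{m=1}^{n} α_m^{(2)}(n) m^(2k) = δ_{1k}`. -/
theorem alpha2_orthogonality (n : ℕ) (hn : 1 ≤ n) (k : ℕ) (hk1 : 1 ≤ k) (hkn : k ≤ n) :
    ∑ m ∈ Finset.Icc 1 n, alpha2 n m * (m : ℝ) ^ (2 * k) =
      if k = 1 then 1 else 0 := by
  have hfact : ((n.factorial : ℝ)) ≠ 0 := Nat.cast_ne_zero.mpr n.factorial_ne_zero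
  have hkey := key n k hn hk1 hkn
  have hins : Finset.range (n+1) = insert 0 (Finset.Icc 1 n) := by
    ext j; simp only [Finset.mem_range, Finset.mem_insert, Finset.mem_Icc]; omega
  have h0 : (0:ℕ) ∉ Finset.Icc 1 n := by simp
  rw [hins, Finset.sum_insert h0] at hkey
  have hzero : (((0:ℕ):ℝ)^2)^(k-1) *
      ∏ j ∈ (insert 0 (Finset.Icc 1 n)).erase 0, (((0:ℕ):ℝ)^2 - (j:ℝ)^2)⁻¹
      = (if k = 1 then 1 else 0) * ((-1)^n / (n.factorial:ℝ)^2) := by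
    rw [Finset.erase_insert h0]
    congr 1
    · rcases eq_or_ne k 1 with h|h
      · simp [h]
      · have hk0 : k - 1 ≠ 0 := by omega
        simp [h, zero_pow hk0]
    · calc ∏ j ∈ Finset.Icc 1 n, (((0:ℕ):ℝ)^2 - (j:ℝ)^2)⁻¹
          = ∏ j ∈ Finset.Icc 1 n, (-1 * (((j:ℝ))^2)⁻¹) := by
            refine Finset.prod_congr rfl fun j hj => ?_
            rw [show ((0:ℕ):ℝ)^2 - (j:ℝ)^2 = -((j:ℝ)^2) by push_cast; ring, inv_neg]; ring
        _ = (-1)^n / (n.factorial:ℝ)^2 := by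
            rw [Finset.prod_mul_distrib, Finset.prod_const, Nat.card_Icc,
              Finset.prod_inv_distrib, prod_Icc_sq, Nat.add_sub_cancel, div_eq_mul_inv]
  have hterms : ∑ m ∈ Finset.Icc 1 n, ((((m:ℕ)):ℝ)^2)^(k-1) *
      ∏ j ∈ (insert 0 (Finset.Icc 1 n)).erase m, (((m:ℕ):ℝ)^2 - (j:ℝ)^2)⁻¹
      = (-1)^(n-1)/(n.factorial:ℝ)^2 *
        ∑ m ∈ Finset.Icc 1 n, alpha2 n m * (m:ℝ)^(2*k) := by
    rw [Finset.mul_sum]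
    refine Finset.sum_congr rfl fun m hm => ?_
    rw [← hins]
    exact term_eq n k m hn hk1 hm
  rw [hzero, hterms] at hkey
  set S := ∑ m ∈ Finset.Icc 1 n, alpha2 n m * (m:ℝ)^(2*k) with hS
  set δ : ℝ := if k = 1 then 1 else 0 with hδ
  obtain ⟨n', rfl⟩ : ∃ n', n = n'+1 := ⟨n-1, by omega⟩
  rw [Nat.add_sub_cancel, pow_succ] at hkey
  set c : ℝ := (-1)^n' with hc
  have hcne : c ≠ 0 := pow_ne_zero _ (by norm_num)
  have h2 : c * (S - δ) = 0 := by
    field_simp at hkey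
    have h3 : (c * (S - δ)) * (((n'+1).factorial:ℝ))^2 = 0 := by linear_combination (((n'+1).factorial:ℝ))^2 * hkey
    rcases mul_eq_zero.mp h3 with h|h
    · exact h
    · exact absurd h (pow_ne_zero _ hfact)
  rcases mul_eq_zero.mp h2 with h|h
  · exact absurd h hcne
  · linarith
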